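/- Let a bounded and monotonic routing metric be assigned over a finite connected system S with root r. Then for every vertex v ≠ r there exists a simple path r = u_0, u_1, …, u_k = v such that for every index i ∈ {0,…,k}, the metric of the prefix path (u_0,…,u_i) computed from r equals μ(u_i, r); in particular every prefix of this path is a maximum metric path. -/

import Mathlib

def MetBounded {M W : Type} [LinearOrder M] (met : M → W → M) : Prop :=
  ∀ m w, met m w ≤ m

def MetMonotonic {M W : Type} [LinearOrder M] (met : M → W → M) : Prop :=
  ∀ m m' w, m ≤ m' → met m w ≤ met m' w

def MetStrictlyDecreasing {M W : Type} [LinearOrder M] (met : M → W → M) : Prop :=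
  ∀ m : M, (∀ w, met m w < m) ∨ (∀ w, met m w = m)

def IsMetFixedPoint {M W : Type} (met : M → W → M) (m : M) : Prop :=
  ∀ w, met m w = m

/-- The metric value of a walk, computed from its start with initial value `m`. -/
def walkVal {M W V : Type} (met : M → W → M) (wf : V → V → W) {G : SimpleGraph V} :
    {u v : V} → G.Walk u v → M → M
  | _, _, SimpleGraph.Walk.nil, m => m
  | u, _, SimpleGraph.Walk.cons (v := x) _ q, m => walkVal met wf q (met m (wf u x))

/-- `mu v p` is the maximum, over simple paths from `p` to `v`, of the path metric. -/
def IsMaxMetric {M W V : Type} [LinearOrder M] (met : M → W → M) (wf : V → V → W)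
    (G : SimpleGraph V) (mr : M) (mu : V → V → M) : Prop :=
  ∀ v p : V,
    (∃ q : G.Walk p v, q.IsPath ∧ walkVal met wf q mr = mu v p) ∧
    (∀ q : G.Walk p v, q.IsPath → walkVal met wf q mr ≤ mu v p)

namespace Statement4Aux
open SimpleGraph Walk

set_option linter.unusedSectionVars false

variable {M W V : Type} [LinearOrder M] (met : M → W → M) (wf : V → V → W) {G : SimpleGraph V}

/-- value after the first `n` steps of the walk -/
def valAt : {u v : V} → G.Walk u v → ℕ → M → M
  | _, _, .nil, _, m => m
  | _, _, .cons _ _, 0, m => m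
  | u, _, .cons (v := x) _ q, n+1, m => valAt q n (met m (wf u x))

theorem walkVal_cons {u x v : V} (h : G.Adj u x) (q : G.Walk x v) (m : M) :
    walkVal met wf (Walk.cons h q) m = walkVal met wf q (met m (wf u x)) := rfl

theorem walkVal_append {a b c : V} (p : G.Walk a b) (q : G.Walk b c) (m : M) :
    walkVal met wf (p.append q) m = walkVal met wf q (walkVal met wf p m) := by
  induction p generalizing m with
  | nil => rfl
  | cons h p ih => simp [walkVal_cons, ih]

theorem walkVal_le (hbound : MetBounded met) {a b : V} (p : G.Walk a b) (m : M) :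
    walkVal met wf p m ≤ m := by
  induction p generalizing m with
  | nil => exact le_rfl
  | cons h p ih => exact le_trans (ih _) (hbound _ _)

theorem walkVal_mono (hmono : MetMonotonic met)
    {a b : V} (p : G.Walk a b) {m m' : M} (hm : m ≤ m') :
    walkVal met wf p m ≤ walkVal met wf p m' := by
  induction p generalizing m m' with
  | nil => exact hm
  | cons h p ih => exact ih (hmono _ _ _ hm)

theorem valAt_append_left {a b c : V} (p : G.Walk a b) (q : G.Walk b c) (m : M) :
    valAt met wf (p.append q) p.length m = walkVal met wf p m := by
  induction p generalizing m with
  | nil => cases q <;> rfl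
  | cons h p ih => exact ih q _

theorem valAt_length {a b : V} (p : G.Walk a b) (m : M) :
    valAt met wf p p.length m = walkVal met wf p m := by
  induction p generalizing m with
  | nil => rfl
  | cons h p ih => simpa [valAt, walkVal_cons] using ih _

theorem valAt_concat {a b c : V} (p : G.Walk a b) (h : G.Adj b c) {n : ℕ}
    (hn : n ≤ p.length) (m : M) :
    valAt met wf (p.concat h) n m = valAt met wf p n m := by
  induction p generalizing m n with
  | nil => simp at hn; subst hn; rfl
  | cons h' p ih =>
      cases n with
      | zero => rfl
      | succ n => simpa [Walk.concat_cons, valAt] using ih _ (by simpa using hn) _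

theorem getVert_append_length {a b c : V} (p : G.Walk a b) (q : G.Walk b c) :
    (p.append q).getVert p.length = b := by
  simp [Walk.getVert_append]

theorem getVert_concat_of_le {a b c : V} (p : G.Walk a b) (h : G.Adj b c) {n : ℕ}
    (hn : n ≤ p.length) : (p.concat h).getVert n = p.getVert n := by
  rw [Walk.concat_eq_append, Walk.getVert_append]
  rcases lt_or_eq_of_le hn with h' | h'
  · simp [h']
  · subst h'
    simp [Walk.getVert_length]

theorem isPath_concat {a b c : V} {p : G.Walk a b} (hp : p.IsPath) (h : G.Adj b c)
    (hc : c ∉ p.support) : (p.concat h).IsPath := by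
  rw [← isPath_reverse_iff, Walk.reverse_concat, Walk.cons_isPath_iff]
  exact ⟨hp.reverse, by simpa using hc⟩

theorem walkVal_concat {a b c : V} (p : G.Walk a b) (h : G.Adj b c) (m : M) :
    walkVal met wf (p.concat h) m = met (walkVal met wf p m) (wf b c) := by
  rw [Walk.concat_eq_append, walkVal_append]; rfl

section Main

variable (mr : M) (hmr : ∀ m : M, m ≤ mr)
  (hbound : MetBounded met) (hmono : MetMonotonic met)
  (hconn : G.Connected) (r : V)
  (mu : V → V → M) (hmu : IsMaxMetric met wf G mr mu)

include hmr hbound hmono hmu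

theorem mu_rr : mu r r = mr := by
  obtain ⟨⟨p, hp, hval⟩, hub⟩ := hmu r r
  refine le_antisymm ?_ ?_
  · rw [← hval]; exact le_trans (walkVal_le met wf hbound p mr) le_rfl
  · exact hub Walk.nil Walk.IsPath.nil

theorem mu_step {a c : V} (h : G.Adj a c) : met (mu a r) (wf a c) ≤ mu c r := by
  classical
  obtain ⟨⟨p, hp, hval⟩, _⟩ := hmu a r
  by_cases hc : c ∈ p.support
  · have h1 : walkVal met wf p mr ≤ walkVal met wf (p.takeUntil c hc) mr := by
      conv_lhs => rw [← p.take_spec hc]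
      rw [walkVal_append]
      exact walkVal_le met wf hbound _ _
    have h2 : walkVal met wf (p.takeUntil c hc) mr ≤ mu c r :=
      (hmu c r).2 _ (hp.takeUntil hc)
    calc met (mu a r) (wf a c) ≤ mu a r := hbound _ _
      _ = walkVal met wf p mr := hval.symm
      _ ≤ mu c r := le_trans h1 h2
  · have hpath : (p.concat h).IsPath := isPath_concat hp h hc
    have := (hmu c r).2 _ hpath
    rwa [walkVal_concat, hval] at this

theorem cross (T : Finset V) {a b : V} (p : G.Walk a b) (m : M)
    (ha : a ∈ T) (hb : b ∉ T) (hm : m ≤ mu a r) :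
    ∃ x y, x ∈ T ∧ y ∉ T ∧ G.Adj x y ∧ walkVal met wf p m ≤ met (mu x r) (wf x y) := by
  induction p generalizing m with
  | nil => exact absurd ha hb
  | @cons a c b h q ih =>
      by_cases hcT : c ∈ T
      · obtain ⟨x, y, h1, h2, h3, h4⟩ := ih (met m (wf a c)) hcT hb
          (le_trans (hmono _ _ _ hm) (mu_step met wf mr hmr hbound hmono r mu hmu h))
        exact ⟨x, y, h1, h2, h3, h4⟩
      · refine ⟨a, c, ha, hcT, h, ?_⟩
        calc walkVal met wf (Walk.cons h q) m
            = walkVal met wf q (met m (wf a c)) := rfl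
          _ ≤ met m (wf a c) := walkVal_le met wf hbound _ _
          _ ≤ met (mu a r) (wf a c) := hmono _ _ _ hm

/-- the invariant of the greedy construction -/
def Inv (H : SimpleGraph V) (T : Finset V) : Prop :=
  r ∈ T ∧ ∀ u ∈ T, ∃ q : H.Walk r u, q.IsPath ∧ (∀ x ∈ q.support, x ∈ T) ∧
    ∀ n ≤ q.length, valAt met wf q n mr = mu (q.getVert n) r

include hconn in
theorem grow [Fintype V] [DecidableEq V] (T : Finset V) (hT : Inv met wf mr r mu G T)
    {b : V} (hb : b ∉ T) :
    ∃ v', v' ∉ T ∧ Inv met wf mr r mu G (insert v' T) := by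
  classical
  obtain ⟨hr, hinv⟩ := hT
  have hmurr := mu_rr met wf mr hmr hbound hmono r mu hmu
  -- a crossing edge exists
  obtain ⟨w⟩ := hconn.preconnected r b
  obtain ⟨x, y, hx, hy, hxy, -⟩ :=
    cross met wf mr hmr hbound hmono r mu hmu T w mr hr hb (le_of_eq hmurr.symm)
  -- choose the maximizing crossing edge
  set B : Finset (V × V) :=
    Finset.univ.filter (fun e => e.1 ∈ T ∧ e.2 ∉ T ∧ G.Adj e.1 e.2) with hB
  have hBne : B.Nonempty := ⟨(x, y), by simp [hB, hx, hy, hxy]⟩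
  obtain ⟨⟨u, v'⟩, huv, hmax⟩ :=
    B.exists_max_image (fun e => met (mu e.1 r) (wf e.1 e.2)) hBne
  simp only [hB, Finset.mem_filter, Finset.mem_univ, true_and] at huv
  obtain ⟨huT, hv'T, hadj⟩ := huv
  -- the good path to u
  obtain ⟨q, hq, hsupp, hval⟩ := hinv u huT
  have hqval : walkVal met wf q mr = mu u r := by
    have := hval q.length le_rfl
    rwa [valAt_length, Walk.getVert_length] at this
  have hv'supp : v' ∉ q.support := fun hmem => hv'T (hsupp _ hmem)
  have hq'path : (q.concat hadj).IsPath := isPath_concat hq hadj hv'supp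
  have hq'val : walkVal met wf (q.concat hadj) mr = met (mu u r) (wf u v') := by
    rw [walkVal_concat, hqval]
  -- the greedy value is exactly mu v' r
  have hmuv' : mu v' r = met (mu u r) (wf u v') := by
    refine le_antisymm ?_ ?_
    · obtain ⟨⟨p, hp, hpval⟩, -⟩ := hmu v' r
      obtain ⟨x', y', hx', hy', hxy', hle⟩ :=
        cross met wf mr hmr hbound hmono r mu hmu T p mr hr hv'T (le_of_eq hmurr.symm)
      calc mu v' r = walkVal met wf p mr := hpval.symm
        _ ≤ met (mu x' r) (wf x' y') := hle
        _ ≤ met (mu u r) (wf u v') := hmax (x', y') (by simp [hB, hx', hy', hxy'])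
    · rw [← hq'val]; exact (hmu v' r).2 _ hq'path
  refine ⟨v', hv'T, Finset.mem_insert_of_mem hr, fun u'' hu'' => ?_⟩
  rcases Finset.mem_insert.mp hu'' with h'' | h''
  · subst h''
    refine ⟨q.concat hadj, hq'path, ?_, ?_⟩
    · intro z hz
      rw [Walk.support_concat] at hz
      simp only [List.concat_eq_append, List.mem_append, List.mem_singleton] at hz
      rcases hz with hz | hz
      · exact Finset.mem_insert_of_mem (hsupp _ hz)
      · simp [hz]
    · intro n hn
      rw [Walk.length_concat] at hn
      rcases Nat.lt_or_ge n (q.length + 1) with h' | h'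
      · have hnq : n ≤ q.length := Nat.lt_succ_iff.mp h'
        rw [valAt_concat met wf q hadj hnq, getVert_concat_of_le _ _ hnq]
        exact hval n hnq
      · have : n = q.length + 1 := le_antisymm hn h'
        subst this
        have h1 : (q.concat hadj).length = q.length + 1 := Walk.length_concat _ _
        rw [← h1, valAt_length, Walk.getVert_length, hq'val, hmuv']
  · obtain ⟨q₀, hq₀, hs₀, hv₀⟩ := hinv u'' h''
    exact ⟨q₀, hq₀, fun z hz => Finset.mem_insert_of_mem (hs₀ z hz), hv₀⟩

include hconn in
theorem reach [Fintype V] [DecidableEq V] (n : ℕ) (T : Finset V) (hT : Inv met wf mr r mu G T)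
    (hcard : Fintype.card V ≤ T.card + n) (v : V) :
    ∃ q : G.Walk r v, q.IsPath ∧
      ∀ k ≤ q.length, valAt met wf q k mr = mu (q.getVert k) r := by
  classical
  induction n generalizing T with
  | zero =>
      have hTuniv : T = Finset.univ :=
        Finset.eq_univ_of_card T (le_antisymm (Finset.card_le_univ T) (by simpa using hcard))
      obtain ⟨q, hq, -, hv⟩ := hT.2 v (hTuniv ▸ Finset.mem_univ v)
      exact ⟨q, hq, hv⟩
  | succ n ih =>
      by_cases hvT : v ∈ T
      · obtain ⟨q, hq, -, hv⟩ := hT.2 v hvT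
        exact ⟨q, hq, hv⟩
      · obtain ⟨v', hv', hT'⟩ :=
          grow met wf mr hmr hbound hmono hconn r mu hmu T hT hvT
        refine ih _ hT' ?_
        rw [Finset.card_insert_of_notMem hv']
        omega

end Main

end Statement4Aux


/-- For a bounded monotonic metric assigned over a finite connected
system with root `r`, for every `v ≠ r` there is a simple path from `r` to `v`
every prefix of which realizes the maximum metric of its endpoint. -/
theorem statement_4 {M W V : Type} [LinearOrder M] [Fintype V]
    (met : M → W → M) (mr : M) (hmr : ∀ m : M, m ≤ mr)
    (hbound : MetBounded met) (hmono : MetMonotonic met)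
    (G : SimpleGraph V) (hconn : G.Connected) (r : V)
    (wf : V → V → W) (hwf : ∀ u v : V, wf u v = wf v u)
    (mu : V → V → M) (hmu : IsMaxMetric met wf G mr mu)
    (v : V) (hv : v ≠ r) :
    ∃ q : G.Walk r v, q.IsPath ∧
      ∀ (u : V) (q₁ : G.Walk r u) (q₂ : G.Walk u v),
        q = q₁.append q₂ → walkVal met wf q₁ mr = mu u r := by
  classical
  open Statement4Aux in
  have hInv : Statement4Aux.Inv met wf mr r mu G ({r} : Finset V) := by
    refine ⟨Finset.mem_singleton_self r, fun u hu => ?_⟩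
    rw [Finset.mem_singleton] at hu
    obtain rfl : r = u := hu.symm
    refine ⟨SimpleGraph.Walk.nil, SimpleGraph.Walk.IsPath.nil, by simp, ?_⟩
    intro n hn
    simp only [SimpleGraph.Walk.length_nil, Nat.le_zero] at hn
    subst hn
    show mr = mu r r
    exact (Statement4Aux.mu_rr met wf mr hmr hbound hmono r mu hmu).symm
  obtain ⟨q, hq, hval⟩ :=
    Statement4Aux.reach met wf mr hmr hbound hmono hconn r mu hmu
      (Fintype.card V) ({r} : Finset V) hInv (by simp) v
  refine ⟨q, hq, fun u q₁ q₂ hsplit => ?_⟩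
  have hlen : q₁.length ≤ q.length := by
    rw [hsplit, SimpleGraph.Walk.length_append]; omega
  have h1 : walkVal met wf q₁ mr = Statement4Aux.valAt met wf q q₁.length mr := by
    rw [hsplit, Statement4Aux.valAt_append_left]
  have h2 : q.getVert q₁.length = u := by
    rw [hsplit]; exact Statement4Aux.getVert_append_length q₁ q₂
  rw [h1, hval q₁.length hlen, h2]
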